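/- Suppose λ₀ is a point of analyticity of M_B and λ₀ lies in the closure of ρ(A_B). Then for every Φ ∈ 𝒮 and every Φ̃ ∈ 𝒮̃ there exist an open neighbourhood V of λ₀ and an analytic function g : V → ℂ such that g(λ) = ⟨(A_B − λI)^{−1}Φ, Φ̃⟩_H for all λ ∈ V ∩ ρ(A_B). The same conclusion holds for every Φ ∈ 𝒯 and every Φ̃ ∈ 𝒯̃. -/

import Mathlib

open scoped InnerProductSpace

variable {H 𝓗 𝓚 : Type*}
  [NormedAddCommGroup H] [InnerProductSpace ℂ H] [CompleteSpace H]
  [NormedAddCommGroup 𝓗] [InnerProductSpace ℂ 𝓗] [CompleteSpace 𝓗]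
  [NormedAddCommGroup 𝓚] [InnerProductSpace ℂ 𝓚] [CompleteSpace 𝓚]

/-- `R` is the (bounded, everywhere defined) inverse of `A_B − λ`, where `A_B` is the
restriction of `T` to `{u ∈ D(T) : Γ₁ u = B (Γ₂ u)}`. -/
def IsResolventAt (dom : Submodule ℂ H) (T : dom →ₗ[ℂ] H)
    (Γ₁ : dom →ₗ[ℂ] 𝓗) (Γ₂ : dom →ₗ[ℂ] 𝓚) (B : 𝓚 →L[ℂ] 𝓗)
    (lam : ℂ) (R : H →L[ℂ] H) : Prop :=
  (∀ h : H, ∃ hm : R h ∈ dom,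
      Γ₁ ⟨R h, hm⟩ = B (Γ₂ ⟨R h, hm⟩) ∧ T ⟨R h, hm⟩ - lam • R h = h) ∧
  (∀ u : dom, Γ₁ u = B (Γ₂ u) → R (T u - lam • (u : H)) = (u : H))

/-- The resolvent set `ρ(A_B)`. -/
def resolventSetB (dom : Submodule ℂ H) (T : dom →ₗ[ℂ] H)
    (Γ₁ : dom →ₗ[ℂ] 𝓗) (Γ₂ : dom →ₗ[ℂ] 𝓚) (B : 𝓚 →L[ℂ] 𝓗) : Set ℂ :=
  {lam | ∃ R : H →L[ℂ] H, IsResolventAt dom T Γ₁ Γ₂ B lam R}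

/-- The space `𝒮 = Span_{δ ∉ σ(A_B)} (A_B − δ)⁻¹ Ran (S_{μ₀,B})`. -/
def spaceS (dom : Submodule ℂ H) (T : dom →ₗ[ℂ] H)
    (Γ₁ : dom →ₗ[ℂ] 𝓗) (Γ₂ : dom →ₗ[ℂ] 𝓚) (B : 𝓚 →L[ℂ] 𝓗) (μ₀ : ℂ) :
    Submodule ℂ H :=
  Submodule.span ℂ {x : H | ∃ (δ : ℂ) (R : H →L[ℂ] H) (v : dom),
    IsResolventAt dom T Γ₁ Γ₂ B δ R ∧ T v = μ₀ • (v : H) ∧ x = R (v : H)}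

/-- The space `𝒯 = Span_{μ ∉ σ(A_B)} Ran (S_{μ,B})`. -/
def spaceT (dom : Submodule ℂ H) (T : dom →ₗ[ℂ] H)
    (Γ₁ : dom →ₗ[ℂ] 𝓗) (Γ₂ : dom →ₗ[ℂ] 𝓚) (B : 𝓚 →L[ℂ] 𝓗) :
    Submodule ℂ H :=
  Submodule.span ℂ {x : H | ∃ (μ : ℂ) (hx : x ∈ dom),
    μ ∈ resolventSetB dom T Γ₁ Γ₂ B ∧ T ⟨x, hx⟩ = μ • x}

/-- `lam₀` is a point of analyticity of the Weyl function `M_B`: on some open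
neighbourhood `U` of `lam₀`, for each `f ∈ Ran(Γ₁ − BΓ₂)` there is an analytic
function agreeing with `M_B(·) f` on `U ∩ ρ(A_B)`. -/
def MAnalyticAt (dom : Submodule ℂ H) (T : dom →ₗ[ℂ] H)
    (Γ₁ : dom →ₗ[ℂ] 𝓗) (Γ₂ : dom →ₗ[ℂ] 𝓚) (B : 𝓚 →L[ℂ] 𝓗) (lam₀ : ℂ) : Prop :=
  ∃ U : Set ℂ, IsOpen U ∧ lam₀ ∈ U ∧
    ∀ f ∈ Set.range (fun u : dom => Γ₁ u - B (Γ₂ u)),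
      ∃ m : ℂ → 𝓚, (∀ z ∈ U, AnalyticAt ℂ m z) ∧
        ∀ lam ∈ U ∩ resolventSetB dom T Γ₁ Γ₂ B,
          ∀ u : dom, (T u = lam • (u : H) ∧ Γ₁ u - B (Γ₂ u) = f) → m lam = Γ₂ u

/-! ### Auxiliary lemmas -/

section Aux

variable {dom : Submodule ℂ H} {T : dom →ₗ[ℂ] H}
  {Γ₁ : dom →ₗ[ℂ] 𝓗} {Γ₂ : dom →ₗ[ℂ] 𝓚} {B : 𝓚 →L[ℂ] 𝓗}

/-- The resolvent at a point is unique. -/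
lemma stmt6_resolvent_unique {lam : ℂ} {R R' : H →L[ℂ] H}
    (h1 : IsResolventAt dom T Γ₁ Γ₂ B lam R)
    (h2 : IsResolventAt dom T Γ₁ Γ₂ B lam R') : R = R' := by
  ext h
  obtain ⟨hm, hbc, heq⟩ := h2.1 h
  have h3 : R (T ⟨R' h, hm⟩ - lam • (R' h)) = R' h := h1.2 ⟨R' h, hm⟩ hbc
  rw [heq] at h3
  exact h3

/-- Neumann-series shift of the resolvent. -/
lemma stmt6_resolvent_shift {δ : ℂ} {R : H →L[ℂ] H}
    (hR : IsResolventAt dom T Γ₁ Γ₂ B δ R) (lam : ℂ)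
    (hnear : ‖(lam - δ) • R‖ < 1) :
    IsResolventAt dom T Γ₁ Γ₂ B lam
      (R * Ring.inverse (1 - (lam - δ) • R)) := by
  set t : ℂ := lam - δ with ht
  have hu : IsUnit ((1 : H →L[ℂ] H) - t • R) := (Units.oneSub (t • R) hnear).isUnit
  set Q : H →L[ℂ] H := Ring.inverse (1 - t • R) with hQdef
  have hQ1 : (1 - t • R) * Q = 1 := Ring.mul_inverse_cancel _ hu
  have hQ2 : Q * (1 - t • R) = 1 := Ring.inverse_mul_cancel _ hu
  have hswap : R * (1 - t • R) = (1 - t • R) * R := by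
    simp only [mul_sub, sub_mul, mul_one, one_mul, mul_smul_comm, smul_mul_assoc]
  have hcomm : R * Q = Q * R := by
    calc R * Q = Q * (1 - t • R) * (R * Q) := by rw [hQ2, one_mul]
      _ = Q * ((1 - t • R) * R * Q) := by simp only [mul_assoc]
      _ = Q * (R * (1 - t • R) * Q) := by rw [← hswap]
      _ = Q * R * ((1 - t • R) * Q) := by simp only [mul_assoc]
      _ = Q * R := by rw [hQ1, mul_one]
  constructor
  · intro h
    obtain ⟨hm, hbc, heq⟩ := hR.1 (Q h)
    refine ⟨hm, hbc, ?_⟩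
    have key : T ⟨R (Q h), hm⟩ - lam • R (Q h) = Q h - t • (R (Q h)) := by
      rw [show lam = δ + t by ring, add_smul, ← sub_sub, heq]
    have key2 : Q h - t • (R (Q h)) = ((1 - t • R) * Q) h := by
      simp [ContinuousLinearMap.mul_apply, ContinuousLinearMap.sub_apply,
        ContinuousLinearMap.smul_apply]
    calc T ⟨(R * Q) h, hm⟩ - lam • (R * Q) h
        = T ⟨R (Q h), hm⟩ - lam • R (Q h) := rfl
      _ = ((1 - t • R) * Q) h := by rw [key, key2]
      _ = h := by rw [hQ1, ContinuousLinearMap.one_apply]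
  · intro u hbc
    have h2 := hR.2 u hbc
    have key : R (T u - lam • (u : H)) = (u : H) - t • R (u : H) := by
      rw [show lam = δ + t by ring, add_smul, ← sub_sub, map_sub, h2, map_smul]
    have key2 : (u : H) - t • R (u : H) = ((1 - t • R)) (u : H) := by
      simp [ContinuousLinearMap.sub_apply, ContinuousLinearMap.smul_apply]
    calc (R * Q) (T u - lam • (u : H))
        = (Q * R) (T u - lam • (u : H)) := by rw [hcomm]
      _ = Q (R (T u - lam • (u : H))) := rfl
      _ = Q ((1 - t • R) (u : H)) := by rw [key, key2]
      _ = (Q * (1 - t • R)) (u : H) := rfl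
      _ = (u : H) := by rw [hQ2, ContinuousLinearMap.one_apply]

lemma stmt6_mem_of_near {δ : ℂ} {R : H →L[ℂ] H}
    (hR : IsResolventAt dom T Γ₁ Γ₂ B δ R) (lam : ℂ)
    (hnear : ‖lam - δ‖ * ‖R‖ < 1) :
    lam ∈ resolventSetB dom T Γ₁ Γ₂ B := by
  refine ⟨_, stmt6_resolvent_shift hR lam ?_⟩
  rwa [norm_smul]

/-- A uniform a priori bound on `D(A_B)` plus `lam₀ ∈ closure ρ(A_B)` forces
`lam₀ ∈ ρ(A_B)`. -/
lemma stmt6_mem_of_bound {lam₀ : ℂ} {C : ℝ} (hC : 0 ≤ C)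
    (hcl : lam₀ ∈ closure (resolventSetB dom T Γ₁ Γ₂ B))
    (hbd : ∀ u : dom, Γ₁ u = B (Γ₂ u) → ‖(u : H)‖ ≤ C * ‖T u - lam₀ • (u : H)‖) :
    lam₀ ∈ resolventSetB dom T Γ₁ Γ₂ B := by
  obtain ⟨lam, hlam, hdist⟩ :
      ∃ lam ∈ resolventSetB dom T Γ₁ Γ₂ B, dist lam₀ lam < (4 * C + 1)⁻¹ :=
    Metric.mem_closure_iff.mp hcl _ (by positivity)
  obtain ⟨R, hR⟩ := hlam
  have hdist' : ‖lam - lam₀‖ * (4 * C + 1) < 1 := by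
    have h1 : ‖lam - lam₀‖ < (4 * C + 1)⁻¹ := by
      rw [← dist_eq_norm, dist_comm]; exact hdist
    have h2 : (0:ℝ) < 4 * C + 1 := by positivity
    calc ‖lam - lam₀‖ * (4 * C + 1) < (4 * C + 1)⁻¹ * (4 * C + 1) := by
          exact mul_lt_mul_of_pos_right h1 h2
      _ = 1 := inv_mul_cancel₀ h2.ne'
  have heps : (0:ℝ) ≤ ‖lam - lam₀‖ := norm_nonneg _
  have hCe : C * ‖lam - lam₀‖ < 4⁻¹ := by nlinarith
  have hRnorm : ‖R‖ ≤ 2 * C := by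
    apply ContinuousLinearMap.opNorm_le_bound _ (by positivity)
    intro h
    obtain ⟨hm, hbc, heq⟩ := hR.1 h
    have hb : ‖R h‖ ≤ C * ‖T ⟨R h, hm⟩ - lam₀ • (R h)‖ := hbd ⟨R h, hm⟩ hbc
    have hsplit : T ⟨R h, hm⟩ - lam₀ • (R h) = h + (lam - lam₀) • R h := by
      rw [eq_add_of_sub_eq heq]; module
    have ha : ‖R h‖ ≤ C * (‖h‖ + ‖lam - lam₀‖ * ‖R h‖) := by
      refine hb.trans (mul_le_mul_of_nonneg_left ?_ hC)
      rw [hsplit]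
      refine (norm_add_le _ _).trans ?_
      rw [norm_smul]
    nlinarith [norm_nonneg (R h), norm_nonneg h,
      mul_le_mul_of_nonneg_right hCe.le (norm_nonneg (R h))]
  refine stmt6_mem_of_near hR lam₀ ?_
  have h3 : ‖lam₀ - lam‖ = ‖lam - lam₀‖ := by rw [norm_sub_rev]
  rw [h3]
  nlinarith [mul_le_mul_of_nonneg_left hRnorm heps]

end Aux

section Green

variable {dom : Submodule ℂ H} {T : dom →ₗ[ℂ] H}
  {Γ₁ : dom →ₗ[ℂ] 𝓗} {Γ₂ : dom →ₗ[ℂ] 𝓚} {B : 𝓚 →L[ℂ] 𝓗}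
  {domt : Submodule ℂ H} {Tt : domt →ₗ[ℂ] H}
  {Γt₁ : domt →ₗ[ℂ] 𝓚} {Γt₂ : domt →ₗ[ℂ] 𝓗}

/-- The Green identity against an element of the domain of `A_B`. -/
lemma stmt6_green_bc
    (hGreen : ∀ (u : dom) (v : domt),
      ⟪(v : H), T u⟫_ℂ - ⟪Tt v, (u : H)⟫_ℂ = ⟪Γt₂ v, Γ₁ u⟫_ℂ - ⟪Γt₁ v, Γ₂ u⟫_ℂ)
    (u : dom) (hbc : Γ₁ u = B (Γ₂ u)) (w : domt) :
    ⟪(w : H), T u⟫_ℂ - ⟪Tt w, (u : H)⟫_ℂ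
      = -⟪Γt₁ w - (ContinuousLinearMap.adjoint B) (Γt₂ w), Γ₂ u⟫_ℂ := by
  rw [hGreen u w, hbc, inner_sub_left, ContinuousLinearMap.adjoint_inner_left]
  ring

/-- Weak left-inverse bound coming from a point of the resolvent set of the
adjoint problem. -/
lemma stmt6_tilde_bound
    (hGreen : ∀ (u : dom) (v : domt),
      ⟪(v : H), T u⟫_ℂ - ⟪Tt v, (u : H)⟫_ℂ = ⟪Γt₂ v, Γ₁ u⟫_ℂ - ⟪Γt₁ v, Γ₂ u⟫_ℂ)
    {σ : ℂ} {Rt : H →L[ℂ] H}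
    (hRt : IsResolventAt domt Tt Γt₁ Γt₂ (ContinuousLinearMap.adjoint B) σ Rt)
    (u : dom) (hbc : Γ₁ u = B (Γ₂ u)) :
    ‖(u : H)‖ ≤ ‖Rt‖ * ‖T u - (starRingEnd ℂ σ) • (u : H)‖ := by
  obtain ⟨hm, hbct, heqt⟩ := hRt.1 (u : H)
  have hg0 := stmt6_green_bc hGreen u hbc (⟨Rt (u : H), hm⟩ : domt)
  rw [sub_eq_zero.2 hbct, inner_zero_left, neg_zero, sub_eq_zero] at hg0
  have hg : ⟪Rt (u : H), T u⟫_ℂ = ⟪Tt (⟨Rt (u : H), hm⟩ : domt), (u : H)⟫_ℂ := hg0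
  have hTt : Tt (⟨Rt (u : H), hm⟩ : domt) = (u : H) + σ • Rt (u : H) :=
    eq_add_of_sub_eq heqt
  have key : ⟪Rt (u : H), T u - (starRingEnd ℂ σ) • (u : H)⟫_ℂ
      = ⟪(u : H), (u : H)⟫_ℂ := by
    rw [inner_sub_right, inner_smul_right, hg, hTt, inner_add_left, inner_smul_left]
    ring
  rcases eq_or_ne ((u : H)) 0 with h0 | h0
  · rw [h0]; simp only [norm_zero]; positivity
  · have hpos : 0 < ‖(u : H)‖ := norm_pos_iff.mpr h0
    have h1 : ‖(u : H)‖ ^ 2 ≤ (‖Rt‖ * ‖T u - (starRingEnd ℂ σ) • (u : H)‖) * ‖(u : H)‖ := by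
      calc ‖(u : H)‖ ^ 2 = ‖(⟪(u : H), (u : H)⟫_ℂ)‖ := by
            rw [inner_self_eq_norm_sq_to_K]
            simp [Complex.norm_real]
        _ = ‖(⟪Rt (u : H), T u - (starRingEnd ℂ σ) • (u : H)⟫_ℂ)‖ := by rw [key]
        _ ≤ ‖Rt (u : H)‖ * ‖T u - (starRingEnd ℂ σ) • (u : H)‖ :=
            norm_inner_le_norm _ _
        _ ≤ (‖Rt‖ * ‖(u : H)‖) * ‖T u - (starRingEnd ℂ σ) • (u : H)‖ := by
            gcongr; exact Rt.le_opNorm _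
        _ = (‖Rt‖ * ‖T u - (starRingEnd ℂ σ) • (u : H)‖) * ‖(u : H)‖ := by ring
    have h2 : ‖(u : H)‖ * ‖(u : H)‖
        ≤ (‖Rt‖ * ‖T u - (starRingEnd ℂ σ) • (u : H)‖) * ‖(u : H)‖ := by
      rw [← pow_two]; exact h1
    exact le_of_mul_le_mul_right h2 hpos

/-- If `σ` is in the resolvent set of the adjoint problem and
`lam₀ ∈ closure ρ(A_B) \ ρ(A_B)`, then `lam₀ ≠ conj σ`. -/
lemma stmt6_ne_conj
    (hGreen : ∀ (u : dom) (v : domt),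
      ⟪(v : H), T u⟫_ℂ - ⟪Tt v, (u : H)⟫_ℂ = ⟪Γt₂ v, Γ₁ u⟫_ℂ - ⟪Γt₁ v, Γ₂ u⟫_ℂ)
    {lam₀ : ℂ} (hnot : lam₀ ∉ resolventSetB dom T Γ₁ Γ₂ B)
    (hcl : lam₀ ∈ closure (resolventSetB dom T Γ₁ Γ₂ B))
    {σ : ℂ} {Rt : H →L[ℂ] H}
    (hRt : IsResolventAt domt Tt Γt₁ Γt₂ (ContinuousLinearMap.adjoint B) σ Rt) :
    lam₀ ≠ starRingEnd ℂ σ := by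
  intro h
  apply hnot
  refine stmt6_mem_of_bound (norm_nonneg Rt) hcl ?_
  intro u hbc
  have := stmt6_tilde_bound hGreen hRt u hbc
  rwa [← h] at this

end Green

section Formula

variable {dom : Submodule ℂ H} {T : dom →ₗ[ℂ] H}
  {Γ₁ : dom →ₗ[ℂ] 𝓗} {Γ₂ : dom →ₗ[ℂ] 𝓚} {B : 𝓚 →L[ℂ] 𝓗}

/-- `Γ₂` of the resolvent applied to an eigenvector of `T`, in terms of the
analytic continuation `m` of the Weyl function. -/
lemma stmt6_gamma2_eigen {U : Set ℂ} {m : ℂ → 𝓚} {v : dom} {μ lam : ℂ}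
    (hmv : ∀ l ∈ U ∩ resolventSetB dom T Γ₁ Γ₂ B, ∀ u : dom,
      (T u = l • (u : H) ∧ Γ₁ u - B (Γ₂ u) = Γ₁ v - B (Γ₂ v)) → m l = Γ₂ u)
    (hv : T v = μ • (v : H))
    (hlam : lam ∈ U ∩ resolventSetB dom T Γ₁ Γ₂ B) (hne : lam ≠ μ)
    {R : H →L[ℂ] H} (hR : IsResolventAt dom T Γ₁ Γ₂ B lam R)
    (hm : R (v : H) ∈ dom) :
    Γ₂ (⟨R (v : H), hm⟩ : dom) = (lam - μ)⁻¹ • (m lam - Γ₂ v) := by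
  obtain ⟨hm', hbcw, heqw⟩ := hR.1 (v : H)
  set w : dom := ⟨R (v : H), hm⟩ with hw
  have hbcw' : Γ₁ w = B (Γ₂ w) := hbcw
  have hTw : T w = (v : H) + lam • R (v : H) := eq_add_of_sub_eq heqw
  set u : dom := v + (lam - μ) • w with hu
  have hucoe : ((u : H)) = (v : H) + (lam - μ) • (R (v : H)) := by
    simp [hu, hw]
  have hTu : T u = lam • (u : H) := by
    have h1 : T u = T v + (lam - μ) • T w := by simp [hu, map_add, map_smul]
    rw [h1, hTw, hv, hucoe]
    module
  have hbcu : Γ₁ u - B (Γ₂ u) = Γ₁ v - B (Γ₂ v) := by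
    have h1 : Γ₁ u = Γ₁ v + (lam - μ) • Γ₁ w := by simp [hu, map_add, map_smul]
    have h2 : B (Γ₂ u) = B (Γ₂ v) + (lam - μ) • B (Γ₂ w) := by
      simp [hu, map_add, map_smul]
    rw [h1, h2, hbcw']
    module
  have hmval : m lam = Γ₂ u := hmv lam hlam u ⟨hTu, hbcu⟩
  have h3 : Γ₂ u = Γ₂ v + (lam - μ) • Γ₂ w := by simp [hu, map_add, map_smul]
  rw [hmval, h3, add_sub_cancel_left]
  exact (inv_smul_smul₀ (sub_ne_zero.2 hne) _).symm

/-- The first resolvent identity. -/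
lemma stmt6_resolvent_id {lam δ : ℂ} {R Rδ : H →L[ℂ] H}
    (hR : IsResolventAt dom T Γ₁ Γ₂ B lam R)
    (hRδ : IsResolventAt dom T Γ₁ Γ₂ B δ Rδ) (hne : lam ≠ δ) (x : H) :
    R (Rδ x) = (lam - δ)⁻¹ • (R x - Rδ x) := by
  obtain ⟨hm1, hbc1, heq1⟩ := hR.1 x
  obtain ⟨hm2, hbc2, heq2⟩ := hRδ.1 x
  have hs : (lam - δ) ≠ 0 := sub_ne_zero.2 hne
  set w : dom := (lam - δ)⁻¹ • ((⟨R x, hm1⟩ : dom) - (⟨Rδ x, hm2⟩ : dom)) with hwdef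
  have hwcoe : ((w : H)) = (lam - δ)⁻¹ • (R x - Rδ x) := by simp [hwdef]
  have hbcw : Γ₁ w = B (Γ₂ w) := by
    simp only [hwdef, map_smul, map_sub, hbc1, hbc2]
  have e1 : T (⟨R x, hm1⟩ : dom) = x + lam • R x := eq_add_of_sub_eq heq1
  have e2 : T (⟨Rδ x, hm2⟩ : dom) = x + δ • Rδ x := eq_add_of_sub_eq heq2
  have hTw : T w - lam • (w : H) = Rδ x := by
    have h1 : T w = (lam - δ)⁻¹ • (T (⟨R x, hm1⟩ : dom) - T (⟨Rδ x, hm2⟩ : dom)) := by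
      simp [hwdef, map_smul, map_sub]
    rw [h1, e1, e2, hwcoe]
    match_scalars <;> field_simp <;> try ring
  have h2 := hR.2 w hbcw
  rw [hTw] at h2
  rw [h2, hwcoe]

end Formula

/-- The analytic-extension claim for a fixed pair of vectors. -/
def Stmt6Claim (dom : Submodule ℂ H) (T : dom →ₗ[ℂ] H)
    (Γ₁ : dom →ₗ[ℂ] 𝓗) (Γ₂ : dom →ₗ[ℂ] 𝓚) (B : 𝓚 →L[ℂ] 𝓗)
    (lam₀ : ℂ) (Φ Φt : H) : Prop :=
  ∃ (V : Set ℂ) (g : ℂ → ℂ), IsOpen V ∧ lam₀ ∈ V ∧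
    (∀ z ∈ V, AnalyticAt ℂ g z) ∧
    ∀ lam ∈ V ∩ resolventSetB dom T Γ₁ Γ₂ B,
      ∀ R : H →L[ℂ] H, IsResolventAt dom T Γ₁ Γ₂ B lam R →
        g lam = ⟪Φt, R Φ⟫_ℂ

section Claim

variable {dom : Submodule ℂ H} {T : dom →ₗ[ℂ] H}
  {Γ₁ : dom →ₗ[ℂ] 𝓗} {Γ₂ : dom →ₗ[ℂ] 𝓚} {B : 𝓚 →L[ℂ] 𝓗} {lam₀ : ℂ}

lemma stmt6_claim_zero_left (Φt : H) : Stmt6Claim dom T Γ₁ Γ₂ B lam₀ 0 Φt :=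
  ⟨Set.univ, 0, isOpen_univ, trivial, fun _ _ => analyticAt_const,
    fun _ _ R _ => by simp⟩

lemma stmt6_claim_zero_right (Φ : H) : Stmt6Claim dom T Γ₁ Γ₂ B lam₀ Φ 0 :=
  ⟨Set.univ, 0, isOpen_univ, trivial, fun _ _ => analyticAt_const,
    fun _ _ R _ => by simp⟩

lemma stmt6_claim_add_left {Φ₁ Φ₂ Φt : H}
    (h1 : Stmt6Claim dom T Γ₁ Γ₂ B lam₀ Φ₁ Φt)
    (h2 : Stmt6Claim dom T Γ₁ Γ₂ B lam₀ Φ₂ Φt) :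
    Stmt6Claim dom T Γ₁ Γ₂ B lam₀ (Φ₁ + Φ₂) Φt := by
  obtain ⟨V₁, g₁, hV₁, h0₁, ha₁, he₁⟩ := h1
  obtain ⟨V₂, g₂, hV₂, h0₂, ha₂, he₂⟩ := h2
  refine ⟨V₁ ∩ V₂, g₁ + g₂, hV₁.inter hV₂, ⟨h0₁, h0₂⟩, ?_, ?_⟩
  · exact fun z hz => (ha₁ z hz.1).add (ha₂ z hz.2)
  · intro lam hlam R hR
    have e1 := he₁ lam ⟨hlam.1.1, hlam.2⟩ R hR
    have e2 := he₂ lam ⟨hlam.1.2, hlam.2⟩ R hR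
    simp only [Pi.add_apply, e1, e2, map_add, inner_add_right]

lemma stmt6_claim_smul_left {Φ Φt : H} (c : ℂ)
    (h : Stmt6Claim dom T Γ₁ Γ₂ B lam₀ Φ Φt) :
    Stmt6Claim dom T Γ₁ Γ₂ B lam₀ (c • Φ) Φt := by
  obtain ⟨V, g, hV, h0, ha, he⟩ := h
  refine ⟨V, fun z => c * g z, hV, h0, ?_, ?_⟩
  · exact fun z hz => analyticAt_const.mul (ha z hz)
  · intro lam hlam R hR
    show c * g lam = ⟪Φt, R (c • Φ)⟫_ℂ
    rw [he lam hlam R hR, map_smul, inner_smul_right]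

lemma stmt6_claim_add_right {Φ Φt₁ Φt₂ : H}
    (h1 : Stmt6Claim dom T Γ₁ Γ₂ B lam₀ Φ Φt₁)
    (h2 : Stmt6Claim dom T Γ₁ Γ₂ B lam₀ Φ Φt₂) :
    Stmt6Claim dom T Γ₁ Γ₂ B lam₀ Φ (Φt₁ + Φt₂) := by
  obtain ⟨V₁, g₁, hV₁, h0₁, ha₁, he₁⟩ := h1
  obtain ⟨V₂, g₂, hV₂, h0₂, ha₂, he₂⟩ := h2
  refine ⟨V₁ ∩ V₂, g₁ + g₂, hV₁.inter hV₂, ⟨h0₁, h0₂⟩, ?_, ?_⟩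
  · exact fun z hz => (ha₁ z hz.1).add (ha₂ z hz.2)
  · intro lam hlam R hR
    have e1 := he₁ lam ⟨hlam.1.1, hlam.2⟩ R hR
    have e2 := he₂ lam ⟨hlam.1.2, hlam.2⟩ R hR
    simp only [Pi.add_apply, e1, e2, inner_add_left]

lemma stmt6_claim_smul_right {Φ Φt : H} (c : ℂ)
    (h : Stmt6Claim dom T Γ₁ Γ₂ B lam₀ Φ Φt) :
    Stmt6Claim dom T Γ₁ Γ₂ B lam₀ Φ (c • Φt) := by
  obtain ⟨V, g, hV, h0, ha, he⟩ := h
  refine ⟨V, fun z => (starRingEnd ℂ c) * g z, hV, h0, ?_, ?_⟩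
  · exact fun z hz => analyticAt_const.mul (ha z hz)
  · intro lam hlam R hR
    show (starRingEnd ℂ c) * g lam = ⟪c • Φt, R Φ⟫_ℂ
    rw [he lam hlam R hR, inner_smul_left]

/-- Interior case: if `lam₀ ∈ ρ(A_B)`, the claim holds for any pair of vectors. -/
lemma stmt6_case_interior (h0 : lam₀ ∈ resolventSetB dom T Γ₁ Γ₂ B) (Φ Φt : H) :
    Stmt6Claim dom T Γ₁ Γ₂ B lam₀ Φ Φt := by
  obtain ⟨R₀, hR₀⟩ := h0
  refine ⟨Metric.ball lam₀ (‖R₀‖ + 1)⁻¹,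
    fun z => ⟪Φt, R₀ ((Ring.inverse (1 - (z - lam₀) • R₀)) Φ)⟫_ℂ,
    Metric.isOpen_ball, Metric.mem_ball_self (by positivity), ?_, ?_⟩
  · have hzn : ∀ y ∈ Metric.ball lam₀ (‖R₀‖ + 1)⁻¹, ‖(y - lam₀) • R₀‖ < 1 := by
      intro y hy
      rw [norm_smul]
      have h1 : ‖y - lam₀‖ < (‖R₀‖ + 1)⁻¹ := by
        rw [← dist_eq_norm]; exact hy
      have h2 : (0:ℝ) < ‖R₀‖ + 1 := by positivity
      have h3 : ‖y - lam₀‖ * (‖R₀‖ + 1) < 1 := by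
        have := mul_lt_mul_of_pos_right h1 h2
        rwa [inv_mul_cancel₀ h2.ne'] at this
      nlinarith [norm_nonneg R₀, norm_nonneg (y - lam₀)]
    have hdiff : DifferentiableOn ℂ
        (fun z => ⟪Φt, R₀ ((Ring.inverse (1 - (z - lam₀) • R₀)) Φ)⟫_ℂ)
        (Metric.ball lam₀ (‖R₀‖ + 1)⁻¹) := by
      intro y hy
      apply DifferentiableAt.differentiableWithinAt
      have hu : IsUnit ((1 : H →L[ℂ] H) - (y - lam₀) • R₀) :=
        (Units.oneSub _ (hzn y hy)).isUnit
      have d1 : DifferentiableAt ℂ (fun z : ℂ => (1 : H →L[ℂ] H) - (z - lam₀) • R₀) y := by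
        apply (differentiableAt_const _).sub
        exact (differentiableAt_id.sub_const lam₀).smul (differentiableAt_const R₀)
      have d2 : DifferentiableAt ℂ
          (fun z : ℂ => Ring.inverse ((1 : H →L[ℂ] H) - (z - lam₀) • R₀)) y :=
        by have := (differentiableAt_inverse (𝕜 := ℂ) hu).comp y d1; exact this
      have d3 : DifferentiableAt ℂ
          (fun z : ℂ => R₀ ((Ring.inverse (1 - (z - lam₀) • R₀)) Φ)) y :=
        (differentiableAt_const R₀).clm_apply (d2.clm_apply (differentiableAt_const Φ))
      have d4 : DifferentiableAt ℂ
          (fun z : ℂ => (innerSL ℂ Φt) (R₀ ((Ring.inverse (1 - (z - lam₀) • R₀)) Φ))) y :=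
        (innerSL ℂ Φt).differentiableAt.comp y d3
      simpa [innerSL_apply_apply] using d4
    exact fun z hz => (hdiff.analyticAt (Metric.isOpen_ball.mem_nhds hz))
  · intro lam hlam R hR
    have hshift := stmt6_resolvent_shift hR₀ lam (by
      rw [norm_smul]
      have h1 : ‖lam - lam₀‖ < (‖R₀‖ + 1)⁻¹ := by
        rw [← dist_eq_norm]; exact hlam.1
      have h2 : (0:ℝ) < ‖R₀‖ + 1 := by positivity
      have h3 : ‖lam - lam₀‖ * (‖R₀‖ + 1) < 1 := by
        have := mul_lt_mul_of_pos_right h1 h2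
        rwa [inv_mul_cancel₀ h2.ne'] at this
      nlinarith [norm_nonneg R₀, norm_nonneg (lam - lam₀)])
    have hRe : R = R₀ * Ring.inverse (1 - (lam - lam₀) • R₀) :=
      stmt6_resolvent_unique hR hshift
    rw [hRe]
    rfl

end Claim

section Gen

variable {dom : Submodule ℂ H} {T : dom →ₗ[ℂ] H}
  {Γ₁ : dom →ₗ[ℂ] 𝓗} {Γ₂ : dom →ₗ[ℂ] 𝓚} {B : 𝓚 →L[ℂ] 𝓗}
  {domt : Submodule ℂ H} {Tt : domt →ₗ[ℂ] H}
  {Γt₁ : domt →ₗ[ℂ] 𝓚} {Γt₂ : domt →ₗ[ℂ] 𝓗}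

/-- Generator case for the `𝒯` spaces, when `lam₀ ∉ ρ(A_B)`. -/
lemma stmt6_genT
    (hGreen : ∀ (u : dom) (v : domt),
      ⟪(v : H), T u⟫_ℂ - ⟪Tt v, (u : H)⟫_ℂ = ⟪Γt₂ v, Γ₁ u⟫_ℂ - ⟪Γt₁ v, Γ₂ u⟫_ℂ)
    {lam₀ : ℂ} (hnot : lam₀ ∉ resolventSetB dom T Γ₁ Γ₂ B)
    (hcl : lam₀ ∈ closure (resolventSetB dom T Γ₁ Γ₂ B))
    {U : Set ℂ} (hUo : IsOpen U) (hU0 : lam₀ ∈ U)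
    {v : dom} {μ : ℂ} (hμ : μ ∈ resolventSetB dom T Γ₁ Γ₂ B)
    (hv : T v = μ • (v : H))
    {m : ℂ → 𝓚} (hma : ∀ z ∈ U, AnalyticAt ℂ m z)
    (hmv : ∀ l ∈ U ∩ resolventSetB dom T Γ₁ Γ₂ B, ∀ u : dom,
      (T u = l • (u : H) ∧ Γ₁ u - B (Γ₂ u) = Γ₁ v - B (Γ₂ v)) → m l = Γ₂ u)
    {w : domt} {ν : ℂ}
    {Rν : H →L[ℂ] H}
    (hRν : IsResolventAt domt Tt Γt₁ Γt₂ (ContinuousLinearMap.adjoint B) ν Rν)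
    (hw : Tt w = ν • (w : H)) :
    Stmt6Claim dom T Γ₁ Γ₂ B lam₀ (v : H) (w : H) := by
  have hneμ : lam₀ ≠ μ := fun h => hnot (h ▸ hμ)
  have hneν : lam₀ ≠ starRingEnd ℂ ν := stmt6_ne_conj hGreen hnot hcl hRν
  refine ⟨U ∩ ({z | z ≠ μ} ∩ {z | z ≠ starRingEnd ℂ ν}),
    fun z => (z - starRingEnd ℂ ν)⁻¹ *
      (-((innerSL ℂ (Γt₁ w - (ContinuousLinearMap.adjoint B) (Γt₂ w)))
          ((z - μ)⁻¹ • (m z - Γ₂ v))) - ⟪(w : H), (v : H)⟫_ℂ),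
    hUo.inter (isOpen_ne.inter isOpen_ne), ⟨hU0, hneμ, hneν⟩, ?_, ?_⟩
  · have hVo : IsOpen (U ∩ ({z | z ≠ μ} ∩ {z | z ≠ starRingEnd ℂ ν})) :=
      hUo.inter (isOpen_ne.inter isOpen_ne)
    have hdiff : DifferentiableOn ℂ
        (fun z => (z - starRingEnd ℂ ν)⁻¹ *
          (-((innerSL ℂ (Γt₁ w - (ContinuousLinearMap.adjoint B) (Γt₂ w)))
              ((z - μ)⁻¹ • (m z - Γ₂ v))) - ⟪(w : H), (v : H)⟫_ℂ))
        (U ∩ ({z | z ≠ μ} ∩ {z | z ≠ starRingEnd ℂ ν})) := by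
      intro z hz
      obtain ⟨hzU, hzμ, hzν⟩ := hz
      apply DifferentiableAt.differentiableWithinAt
      have d0 : DifferentiableAt ℂ m z := (hma z hzU).differentiableAt
      have d1 : DifferentiableAt ℂ (fun z => (z - μ)⁻¹ • (m z - Γ₂ v)) z :=
        ((differentiableAt_id.sub_const μ).inv (sub_ne_zero.2 hzμ)).smul
          (d0.sub_const (Γ₂ v))
      have d2 : DifferentiableAt ℂ (fun z =>
          (innerSL ℂ (Γt₁ w - (ContinuousLinearMap.adjoint B) (Γt₂ w)))
            ((z - μ)⁻¹ • (m z - Γ₂ v))) z :=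
        (innerSL ℂ _).differentiableAt.comp z d1
      exact ((differentiableAt_id.sub_const (starRingEnd ℂ ν)).inv (sub_ne_zero.2 hzν)).mul
        (d2.neg.sub_const _)
    exact fun z hz => hdiff.analyticAt (hVo.mem_nhds hz)
  · intro lam hlam R hR
    obtain ⟨⟨hzU, hzμ, hzν⟩, hρ⟩ := hlam
    obtain ⟨hmu, hbcu, hequ⟩ := hR.1 (v : H)
    have hψv : Γ₂ (⟨R (v : H), hmu⟩ : dom) = (lam - μ)⁻¹ • (m lam - Γ₂ v) :=
      stmt6_gamma2_eigen hmv hv ⟨hzU, hρ⟩ hzμ hR hmu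
    have hTu : T (⟨R (v : H), hmu⟩ : dom) = (v : H) + lam • R (v : H) :=
      eq_add_of_sub_eq hequ
    have hgr := stmt6_green_bc hGreen (⟨R (v : H), hmu⟩ : dom) hbcu w
    have hgr' : ⟪(w : H), (v : H) + lam • R (v : H)⟫_ℂ
        - ⟪ν • (w : H), R (v : H)⟫_ℂ
        = -⟪Γt₁ w - (ContinuousLinearMap.adjoint B) (Γt₂ w),
            (lam - μ)⁻¹ • (m lam - Γ₂ v)⟫_ℂ := by
      rw [← hTu, ← hw, ← hψv]; exact hgr
    simp only [inner_add_right, inner_smul_right, inner_smul_left] at hgr'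
    have hne2 : lam - starRingEnd ℂ ν ≠ 0 := sub_ne_zero.2 hzν
    show (lam - starRingEnd ℂ ν)⁻¹ *
      (-((innerSL ℂ (Γt₁ w - (ContinuousLinearMap.adjoint B) (Γt₂ w)))
          ((lam - μ)⁻¹ • (m lam - Γ₂ v))) - ⟪(w : H), (v : H)⟫_ℂ)
        = ⟪(w : H), R (v : H)⟫_ℂ
    rw [innerSL_apply_apply, inner_smul_right]
    have e1 : -((lam - μ)⁻¹ * ⟪Γt₁ w - (ContinuousLinearMap.adjoint B) (Γt₂ w),
        m lam - Γ₂ v⟫_ℂ) - ⟪(w : H), (v : H)⟫_ℂ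
        = (lam - starRingEnd ℂ ν) * ⟪(w : H), R (v : H)⟫_ℂ := by
      linear_combination -hgr'
    rw [e1, inv_mul_cancel_left₀ hne2]

/-- Generator case for the `𝒮` spaces, when `lam₀ ∉ ρ(A_B)`. -/
lemma stmt6_genS
    (hGreen : ∀ (u : dom) (v : domt),
      ⟪(v : H), T u⟫_ℂ - ⟪Tt v, (u : H)⟫_ℂ = ⟪Γt₂ v, Γ₁ u⟫_ℂ - ⟪Γt₁ v, Γ₂ u⟫_ℂ)
    {lam₀ : ℂ} (hnot : lam₀ ∉ resolventSetB dom T Γ₁ Γ₂ B)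
    (hcl : lam₀ ∈ closure (resolventSetB dom T Γ₁ Γ₂ B))
    {U : Set ℂ} (hUo : IsOpen U) (hU0 : lam₀ ∈ U)
    {μ₀ : ℂ} (hμ₀ : μ₀ ∈ resolventSetB dom T Γ₁ Γ₂ B)
    {δ : ℂ} {Rδ : H →L[ℂ] H} (hRδ : IsResolventAt dom T Γ₁ Γ₂ B δ Rδ)
    {vd : dom} (hvd : T vd = μ₀ • (vd : H))
    {m : ℂ → 𝓚} (hma : ∀ z ∈ U, AnalyticAt ℂ m z)
    (hmv : ∀ l ∈ U ∩ resolventSetB dom T Γ₁ Γ₂ B, ∀ u : dom,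
      (T u = l • (u : H) ∧ Γ₁ u - B (Γ₂ u) = Γ₁ vd - B (Γ₂ vd)) → m l = Γ₂ u)
    {μt₀ : ℂ} {Rμt : H →L[ℂ] H}
    (hRμt : IsResolventAt domt Tt Γt₁ Γt₂ (ContinuousLinearMap.adjoint B) μt₀ Rμt)
    {σ : ℂ} {Rt : H →L[ℂ] H}
    (hRt : IsResolventAt domt Tt Γt₁ Γt₂ (ContinuousLinearMap.adjoint B) σ Rt)
    {vt : domt} (hvt : Tt vt = μt₀ • (vt : H)) :
    Stmt6Claim dom T Γ₁ Γ₂ B lam₀ (Rδ (vd : H)) (Rt (vt : H)) := by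
  have hneμ₀ : lam₀ ≠ μ₀ := fun h => hnot (h ▸ hμ₀)
  have hneδ : lam₀ ≠ δ := fun h => hnot (h ▸ ⟨Rδ, hRδ⟩)
  have hneσ : lam₀ ≠ starRingEnd ℂ σ := stmt6_ne_conj hGreen hnot hcl hRt
  have hneμt : lam₀ ≠ starRingEnd ℂ μt₀ := stmt6_ne_conj hGreen hnot hcl hRμt
  obtain ⟨hmδ, hbcδ, heqδ⟩ := hRδ.1 (vd : H)
  obtain ⟨hmt, hbct, heqt⟩ := hRt.1 (vt : H)
  refine ⟨U ∩ ({z | z ≠ μ₀} ∩ ({z | z ≠ δ} ∩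
      ({z | z ≠ starRingEnd ℂ σ} ∩ {z | z ≠ starRingEnd ℂ μt₀}))),
    fun z => (z - starRingEnd ℂ σ)⁻¹ *
      ((z - starRingEnd ℂ μt₀)⁻¹ *
        (-((innerSL ℂ (Γt₁ vt - (ContinuousLinearMap.adjoint B) (Γt₂ vt)))
            ((z - δ)⁻¹ • ((z - μ₀)⁻¹ • (m z - Γ₂ vd) - Γ₂ (⟨Rδ (vd : H), hmδ⟩ : dom))))
          - ⟪(vt : H), Rδ (vd : H)⟫_ℂ)
        - ⟪Rt (vt : H), Rδ (vd : H)⟫_ℂ),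
    hUo.inter (isOpen_ne.inter (isOpen_ne.inter (isOpen_ne.inter isOpen_ne))),
    ⟨hU0, hneμ₀, hneδ, hneσ, hneμt⟩, ?_, ?_⟩
  · have hVo : IsOpen (U ∩ ({z | z ≠ μ₀} ∩ ({z | z ≠ δ} ∩
        ({z | z ≠ starRingEnd ℂ σ} ∩ {z | z ≠ starRingEnd ℂ μt₀})))) :=
      hUo.inter (isOpen_ne.inter (isOpen_ne.inter (isOpen_ne.inter isOpen_ne)))
    have hdiff : DifferentiableOn ℂ
        (fun z => (z - starRingEnd ℂ σ)⁻¹ *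
          ((z - starRingEnd ℂ μt₀)⁻¹ *
            (-((innerSL ℂ (Γt₁ vt - (ContinuousLinearMap.adjoint B) (Γt₂ vt)))
                ((z - δ)⁻¹ • ((z - μ₀)⁻¹ • (m z - Γ₂ vd) - Γ₂ (⟨Rδ (vd : H), hmδ⟩ : dom))))
              - ⟪(vt : H), Rδ (vd : H)⟫_ℂ)
            - ⟪Rt (vt : H), Rδ (vd : H)⟫_ℂ))
        (U ∩ ({z | z ≠ μ₀} ∩ ({z | z ≠ δ} ∩
          ({z | z ≠ starRingEnd ℂ σ} ∩ {z | z ≠ starRingEnd ℂ μt₀})))) := by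
      intro z hz
      obtain ⟨hzU, hzμ, hzδ, hzσ, hzμt⟩ := hz
      apply DifferentiableAt.differentiableWithinAt
      have d0 : DifferentiableAt ℂ m z := (hma z hzU).differentiableAt
      have d1 : DifferentiableAt ℂ
          (fun z => (z - δ)⁻¹ • ((z - μ₀)⁻¹ • (m z - Γ₂ vd)
            - Γ₂ (⟨Rδ (vd : H), hmδ⟩ : dom))) z :=
        ((differentiableAt_id.sub_const δ).inv (sub_ne_zero.2 hzδ)).smul
          ((((differentiableAt_id.sub_const μ₀).inv (sub_ne_zero.2 hzμ)).smul
            (d0.sub_const (Γ₂ vd))).sub_const _)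
      have d2 : DifferentiableAt ℂ (fun z =>
          (innerSL ℂ (Γt₁ vt - (ContinuousLinearMap.adjoint B) (Γt₂ vt)))
            ((z - δ)⁻¹ • ((z - μ₀)⁻¹ • (m z - Γ₂ vd)
              - Γ₂ (⟨Rδ (vd : H), hmδ⟩ : dom)))) z :=
        (innerSL ℂ _).differentiableAt.comp z d1
      exact ((differentiableAt_id.sub_const (starRingEnd ℂ σ)).inv (sub_ne_zero.2 hzσ)).mul
        ((((differentiableAt_id.sub_const (starRingEnd ℂ μt₀)).inv (sub_ne_zero.2 hzμt)).mul
          (d2.neg.sub_const _)).sub_const _)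
    exact fun z hz => hdiff.analyticAt (hVo.mem_nhds hz)
  · intro lam hlam R hR
    obtain ⟨⟨hzU, hzμ, hzδ, hzσ, hzμt⟩, hρ⟩ := hlam
    obtain ⟨hmu, hbcu, hequ⟩ := hR.1 (Rδ (vd : H))
    obtain ⟨hmv', hbcv', heqv'⟩ := hR.1 (vd : H)
    have hres : R (Rδ (vd : H)) = (lam - δ)⁻¹ • (R (vd : H) - Rδ (vd : H)) :=
      stmt6_resolvent_id hR hRδ hzδ _
    have hudom : (⟨R (Rδ (vd : H)), hmu⟩ : dom)
        = (lam - δ)⁻¹ • ((⟨R (vd : H), hmv'⟩ : dom) - (⟨Rδ (vd : H), hmδ⟩ : dom)) := by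
      apply Subtype.ext
      simpa using hres
    have hψ2 : Γ₂ (⟨R (vd : H), hmv'⟩ : dom) = (lam - μ₀)⁻¹ • (m lam - Γ₂ vd) :=
      stmt6_gamma2_eigen hmv hvd ⟨hzU, hρ⟩ hzμ hR hmv'
    have hψlam : Γ₂ (⟨R (Rδ (vd : H)), hmu⟩ : dom)
        = (lam - δ)⁻¹ • ((lam - μ₀)⁻¹ • (m lam - Γ₂ vd)
            - Γ₂ (⟨Rδ (vd : H), hmδ⟩ : dom)) := by
      rw [hudom, map_smul, map_sub, hψ2]
    have hTu : T (⟨R (Rδ (vd : H)), hmu⟩ : dom)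
        = Rδ (vd : H) + lam • R (Rδ (vd : H)) := eq_add_of_sub_eq hequ
    -- Green identity with the eigenvector vt
    have hgr1 := stmt6_green_bc hGreen (⟨R (Rδ (vd : H)), hmu⟩ : dom) hbcu vt
    have hgr1' : ⟪(vt : H), Rδ (vd : H) + lam • R (Rδ (vd : H))⟫_ℂ
        - ⟪μt₀ • (vt : H), R (Rδ (vd : H))⟫_ℂ
        = -⟪Γt₁ vt - (ContinuousLinearMap.adjoint B) (Γt₂ vt),
            (lam - δ)⁻¹ • ((lam - μ₀)⁻¹ • (m lam - Γ₂ vd)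
              - Γ₂ (⟨Rδ (vd : H), hmδ⟩ : dom))⟫_ℂ := by
      rw [← hTu, ← hvt, ← hψlam]; exact hgr1
    simp only [inner_add_right, inner_smul_right, inner_smul_left] at hgr1'
    -- Green identity with Rt vt
    have hgr2 := stmt6_green_bc hGreen (⟨R (Rδ (vd : H)), hmu⟩ : dom) hbcu
      (⟨Rt (vt : H), hmt⟩ : domt)
    rw [sub_eq_zero.2 hbct, inner_zero_left, neg_zero] at hgr2
    have hTtt : Tt (⟨Rt (vt : H), hmt⟩ : domt) = (vt : H) + σ • Rt (vt : H) :=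
      eq_add_of_sub_eq heqt
    have hgr2' : ⟪Rt (vt : H), Rδ (vd : H) + lam • R (Rδ (vd : H))⟫_ℂ
        - ⟪(vt : H) + σ • Rt (vt : H), R (Rδ (vd : H))⟫_ℂ = 0 := by
      rw [← hTu, ← hTtt]; exact hgr2
    simp only [inner_add_right, inner_add_left, inner_smul_right, inner_smul_left]
      at hgr2'
    have hne1 : lam - starRingEnd ℂ σ ≠ 0 := sub_ne_zero.2 hzσ
    have hne2 : lam - starRingEnd ℂ μt₀ ≠ 0 := sub_ne_zero.2 hzμt
    show (lam - starRingEnd ℂ σ)⁻¹ *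
      ((lam - starRingEnd ℂ μt₀)⁻¹ *
        (-((innerSL ℂ (Γt₁ vt - (ContinuousLinearMap.adjoint B) (Γt₂ vt)))
            ((lam - δ)⁻¹ • ((lam - μ₀)⁻¹ • (m lam - Γ₂ vd)
              - Γ₂ (⟨Rδ (vd : H), hmδ⟩ : dom))))
          - ⟪(vt : H), Rδ (vd : H)⟫_ℂ)
        - ⟪Rt (vt : H), Rδ (vd : H)⟫_ℂ)
        = ⟪Rt (vt : H), R (Rδ (vd : H))⟫_ℂ
    rw [innerSL_apply_apply, inner_smul_right]
    have e1 : -((lam - δ)⁻¹ * ⟪Γt₁ vt - (ContinuousLinearMap.adjoint B) (Γt₂ vt),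
        (lam - μ₀)⁻¹ • (m lam - Γ₂ vd)
          - Γ₂ (⟨Rδ (vd : H), hmδ⟩ : dom)⟫_ℂ) - ⟪(vt : H), Rδ (vd : H)⟫_ℂ
        = (lam - starRingEnd ℂ μt₀) * ⟪(vt : H), R (Rδ (vd : H))⟫_ℂ := by
      linear_combination -hgr1'
    rw [e1, inv_mul_cancel_left₀ hne2]
    have e2 : ⟪(vt : H), R (Rδ (vd : H))⟫_ℂ - ⟪Rt (vt : H), Rδ (vd : H)⟫_ℂ
        = (lam - starRingEnd ℂ σ) * ⟪Rt (vt : H), R (Rδ (vd : H))⟫_ℂ := by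
      linear_combination -hgr2'
    rw [e2, inv_mul_cancel_left₀ hne1]

end Gen

theorem stmt6 (dom : Submodule ℂ H) (T : dom →ₗ[ℂ] H)
    (Γ₁ : dom →ₗ[ℂ] 𝓗) (Γ₂ : dom →ₗ[ℂ] 𝓚) (B : 𝓚 →L[ℂ] 𝓗)
    (domt : Submodule ℂ H) (Tt : domt →ₗ[ℂ] H)
    (Γt₁ : domt →ₗ[ℂ] 𝓚) (Γt₂ : domt →ₗ[ℂ] 𝓗)
    -- Green identity (paper inner products are linear in the first argument;
    -- Mathlib's `⟪·,·⟫_ℂ` is linear in the second, whence the reversed order)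
    (hGreen : ∀ (u : dom) (v : domt),
      ⟪(v : H), T u⟫_ℂ - ⟪Tt v, (u : H)⟫_ℂ = ⟪Γt₂ v, Γ₁ u⟫_ℂ - ⟪Γt₁ v, Γ₂ u⟫_ℂ)
    (μ₀ : ℂ) (hμ₀ : μ₀ ∈ resolventSetB dom T Γ₁ Γ₂ B)
    (μt₀ : ℂ)
    (hμt₀ : μt₀ ∈ resolventSetB domt Tt Γt₁ Γt₂ (ContinuousLinearMap.adjoint B))
    (lam₀ : ℂ)
    (hM : MAnalyticAt dom T Γ₁ Γ₂ B lam₀)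
    (hcl : lam₀ ∈ closure (resolventSetB dom T Γ₁ Γ₂ B)) :
    -- bordered resolvent is analytic near `lam₀` against elements of `𝒮` and `𝒮̃`
    (∀ Φ ∈ spaceS dom T Γ₁ Γ₂ B μ₀,
      ∀ Φt ∈ spaceS domt Tt Γt₁ Γt₂ (ContinuousLinearMap.adjoint B) μt₀,
        ∃ (V : Set ℂ) (g : ℂ → ℂ), IsOpen V ∧ lam₀ ∈ V ∧
          (∀ z ∈ V, AnalyticAt ℂ g z) ∧
          ∀ lam ∈ V ∩ resolventSetB dom T Γ₁ Γ₂ B,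
            ∀ R : H →L[ℂ] H, IsResolventAt dom T Γ₁ Γ₂ B lam R →
              g lam = ⟪Φt, R Φ⟫_ℂ) ∧
    -- and likewise for elements of `𝒯` and `𝒯̃`
    (∀ Φ ∈ spaceT dom T Γ₁ Γ₂ B,
      ∀ Φt ∈ spaceT domt Tt Γt₁ Γt₂ (ContinuousLinearMap.adjoint B),
        ∃ (V : Set ℂ) (g : ℂ → ℂ), IsOpen V ∧ lam₀ ∈ V ∧
          (∀ z ∈ V, AnalyticAt ℂ g z) ∧
          ∀ lam ∈ V ∩ resolventSetB dom T Γ₁ Γ₂ B,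
            ∀ R : H →L[ℂ] H, IsResolventAt dom T Γ₁ Γ₂ B lam R →
              g lam = ⟪Φt, R Φ⟫_ℂ) := by
  by_cases hρ0 : lam₀ ∈ resolventSetB dom T Γ₁ Γ₂ B
  · exact ⟨fun Φ _ Φt _ => stmt6_case_interior hρ0 Φ Φt,
      fun Φ _ Φt _ => stmt6_case_interior hρ0 Φ Φt⟩
  · obtain ⟨U, hUo, hU0, hMf⟩ := hM
    obtain ⟨Rμt, hRμt⟩ := hμt₀
    constructor
    · -- the 𝒮 case
      intro Φ hΦ
      unfold spaceS at hΦ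
      induction hΦ using Submodule.span_induction with
      | mem x hx =>
        intro Φt hΦt
        obtain ⟨δ, Rδ, vd, hRδ, hvd, rfl⟩ := hx
        unfold spaceS at hΦt
        induction hΦt using Submodule.span_induction with
        | mem y hy =>
          obtain ⟨σ, Rt, vt, hRt, hvt, rfl⟩ := hy
          obtain ⟨m, hma, hmv⟩ := hMf (Γ₁ vd - B (Γ₂ vd)) ⟨vd, rfl⟩
          exact stmt6_genS hGreen hρ0 hcl hUo hU0 hμ₀ hRδ hvd hma hmv hRμt hRt hvt
        | zero => exact stmt6_claim_zero_right _
        | add y z _ _ hy hz => exact stmt6_claim_add_right hy hz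
        | smul c y _ hy => exact stmt6_claim_smul_right c hy
      | zero => exact fun Φt _ => stmt6_claim_zero_left _
      | add x y _ _ hx hy =>
        exact fun Φt hΦt => stmt6_claim_add_left (hx Φt hΦt) (hy Φt hΦt)
      | smul c x _ hx =>
        exact fun Φt hΦt => stmt6_claim_smul_left c (hx Φt hΦt)
    · -- the 𝒯 case
      intro Φ hΦ
      unfold spaceT at hΦ
      induction hΦ using Submodule.span_induction with
      | mem x hx =>
        intro Φt hΦt
        obtain ⟨μ, hxm, hμρ, heig⟩ := hx
        unfold spaceT at hΦt
        induction hΦt using Submodule.span_induction with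
        | mem y hy =>
          obtain ⟨ν, hym, hνρ, heigt⟩ := hy
          obtain ⟨Rν, hRν⟩ := hνρ
          obtain ⟨m, hma, hmv⟩ := hMf (Γ₁ (⟨x, hxm⟩ : dom) - B (Γ₂ (⟨x, hxm⟩ : dom)))
            ⟨⟨x, hxm⟩, rfl⟩
          exact stmt6_genT hGreen hρ0 hcl hUo hU0 hμρ heig hma hmv hRν heigt
        | zero => exact stmt6_claim_zero_right _
        | add y z _ _ hy hz => exact stmt6_claim_add_right hy hz
        | smul c y _ hy => exact stmt6_claim_smul_right c hy
      | zero => exact fun Φt _ => stmt6_claim_zero_left _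
      | add x y _ _ hx hy =>
        exact fun Φt hΦt => stmt6_claim_add_left (hx Φt hΦt) (hy Φt hΦt)
      | smul c x _ hx =>
        exact fun Φt hΦt => stmt6_claim_smul_left c (hx Φt hΦt)
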